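/- Let R be a commutative ring and A a commutative R-algebra, equipped with the Kähler differential calculus (Ω[A⁄R], D). Let X and Y be vector fields. Then: (1) for every finite family (a_1, b_1), …, (a_m, b_m) in A × A with ∑_j a_j·(D b_j) = 0 in Ω[A⁄R], one has ∑_{j=1}^m (X(b_j)·Y(a_j) − Y(b_j)·X(a_j)) = 0, i.e. X ⊗ Y − Y ⊗ X satisfies the antisymmetry condition defining Asym(𝔛); and (2) consequently the commutator X ∘ Y − Y ∘ X is again a vector field, so the quantum Lie bracket induced by the canonical antisymmetric projector X ⊗ Y ↦ X ⊗ Y − Y ⊗ X coincides with the classical commutator bracket. -/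

import Mathlib

section

variable (R A : Type*) [CommRing R] [CommRing A] [Algebra R A]

/-- An `R`-linear map `X : A → A` is a vector field for the Kähler differential calculus
`(Ω[A⁄R], D)` if it vanishes on `ker D` and is a first-order differential operator:
for every finite family `(aᵢ, bᵢ)` with `∑ aᵢbᵢ = 0` and `∑ aᵢ • D bᵢ = 0` one has
`∑ aᵢ * X bᵢ = 0`. -/
def IsVectorFieldKaehler (X : A →ₗ[R] A) : Prop :=
  (∀ a : A, KaehlerDifferential.D R A a = 0 → X a = 0) ∧
  ∀ (n : ℕ) (a b : Fin n → A),
    ∑ i, a i * b i = 0 → ∑ i, a i • KaehlerDifferential.D R A (b i) = 0 →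
      ∑ i, a i * X (b i) = 0

variable {R A}

/-- Any derivation is a vector field for the Kähler differential calculus. -/
lemma derivation_isVectorFieldKaehler (d : Derivation R A A) :
    IsVectorFieldKaehler R A d.toLinearMap := by
  refine ⟨fun a ha => ?_, fun n a b _ h => ?_⟩
  · have h1 := d.liftKaehlerDifferential_comp_D a
    rw [ha, map_zero] at h1
    exact h1.symm
  · have h2 := congrArg d.liftKaehlerDifferential h
    simpa [map_sum, smul_eq_mul, Derivation.liftKaehlerDifferential_comp_D] using h2

/-- Conversely, a vector field is a derivation. -/
def IsVectorFieldKaehler.toDerivation (X : A →ₗ[R] A) (h : IsVectorFieldKaehler R A X) :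
    Derivation R A A where
  toLinearMap := X
  map_one_eq_zero' := h.1 1 (Derivation.map_one_eq_zero _)
  leibniz' a b := by
    have hone : X 1 = 0 := h.1 1 (Derivation.map_one_eq_zero _)
    have key := h.2 4 ![1, -a, -b, a * b] ![a * b, b, a, 1]
      (by simp [Fin.sum_univ_four]; ring)
      (by
        simp only [Fin.sum_univ_four, Matrix.cons_val_zero, Matrix.cons_val_one,
          Matrix.cons_val_two, Matrix.cons_val_three, Matrix.tail_cons,
          Matrix.head_cons, Derivation.leibniz, Derivation.map_one_eq_zero, smul_zero,
          one_smul, neg_smul]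
        abel)
    simp only [Fin.sum_univ_four, Matrix.cons_val_zero, Matrix.cons_val_one,
      Matrix.cons_val_two, Matrix.cons_val_three, Matrix.tail_cons,
      Matrix.head_cons, hone, mul_zero, one_mul, add_zero, smul_eq_mul] at key
    simp only [smul_eq_mul]
    linear_combination key

/-- A vector field kills any finite family with `∑ aᵢ • D bᵢ = 0`. -/
lemma IsVectorFieldKaehler.sum_eq_zero {X : A →ₗ[R] A} (h : IsVectorFieldKaehler R A X)
    {n : ℕ} {a b : Fin n → A} (hab : ∑ i, a i • KaehlerDifferential.D R A (b i) = 0) :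
    ∑ i, a i * X (b i) = 0 := by
  have h2 := congrArg (h.toDerivation X).liftKaehlerDifferential hab
  simp [map_sum, smul_eq_mul, Derivation.liftKaehlerDifferential_comp_D] at h2
  exact h2

variable (R A)

/-- Proposition 6.17, classical correspondence, commutative-algebra
form: for vector fields `X`, `Y` of the Kähler differential calculus `(Ω[A⁄R], D)` of a
commutative `R`-algebra `A`:
(1) `X ⊗ Y - Y ⊗ X` satisfies the antisymmetry condition defining `Asym(𝔛)`: for every
finite family `(aⱼ, bⱼ)` with `∑ⱼ aⱼ • D bⱼ = 0` one has
`∑ⱼ (X(bⱼ)·Y(aⱼ) - Y(bⱼ)·X(aⱼ)) = 0`; and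
(2) consequently the commutator `X ∘ Y - Y ∘ X` is again a vector field, so the quantum
Lie bracket induced by the canonical antisymmetric projector `X ⊗ Y ↦ X ⊗ Y - Y ⊗ X`
coincides with the classical commutator bracket. -/
theorem stmt13 (X Y : A →ₗ[R] A)
    (hX : IsVectorFieldKaehler R A X) (hY : IsVectorFieldKaehler R A Y) :
    (∀ (m : ℕ) (a b : Fin m → A),
      ∑ j, a j • KaehlerDifferential.D R A (b j) = 0 →
      ∑ j, (X (b j) * Y (a j) - Y (b j) * X (a j)) = 0) ∧
    IsVectorFieldKaehler R A (X ∘ₗ Y - Y ∘ₗ X) := by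
  set DX := hX.toDerivation X with hDX
  set DY := hY.toDerivation Y with hDY
  have hXc : ∀ c : A, DX c = X c := fun c => rfl
  have hYc : ∀ c : A, DY c = Y c := fun c => rfl
  have hcomm : (X ∘ₗ Y - Y ∘ₗ X) = (⁅DX, DY⁆ : Derivation R A A).toLinearMap := by
    ext c
    simp [Derivation.commutator_apply, Ring.lie_def, hXc, hYc]
  constructor
  · intro m a b h
    have s1 : ∑ j, a j * X (b j) = 0 := hX.sum_eq_zero h
    have s2 : ∑ j, a j * Y (b j) = 0 := hY.sum_eq_zero h
    have s3 : ∑ j, a j * (X (Y (b j)) - Y (X (b j))) = 0 := by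
      have := (derivation_isVectorFieldKaehler (⁅DX, DY⁆ : Derivation R A A)).sum_eq_zero h
      simpa [Derivation.commutator_apply, Ring.lie_def, hXc, hYc] using this
    have e1 : ∑ j, (a j * Y (X (b j)) + X (b j) * Y (a j)) = 0 := by
      have := congrArg Y s1
      rw [map_sum, map_zero] at this
      rw [← this]
      refine Finset.sum_congr rfl fun j _ => ?_
      have := DY.leibniz (a j) (X (b j))
      simp only [hYc, smul_eq_mul] at this
      rw [this]
    have e2 : ∑ j, (a j * X (Y (b j)) + Y (b j) * X (a j)) = 0 := by
      have := congrArg X s2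
      rw [map_sum, map_zero] at this
      rw [← this]
      refine Finset.sum_congr rfl fun j _ => ?_
      have := DX.leibniz (a j) (Y (b j))
      simp only [hXc, smul_eq_mul] at this
      rw [this]
    calc ∑ j, (X (b j) * Y (a j) - Y (b j) * X (a j))
        = ∑ j, ((a j * Y (X (b j)) + X (b j) * Y (a j))
            - (a j * X (Y (b j)) + Y (b j) * X (a j))
            + a j * (X (Y (b j)) - Y (X (b j)))) := by
          refine Finset.sum_congr rfl fun j _ => ?_; ring
      _ = 0 := by
          rw [Finset.sum_add_distrib, Finset.sum_sub_distrib, e1, e2, s3]; ring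
  · rw [hcomm]
    exact derivation_isVectorFieldKaehler _

end
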